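/- Let d ≥ 2 and ω ∈ C¹(ℝ^d, ℝ) with ω(0) = 0, ∇ω(0) = 0, ω(v) > 0 and ∇ω(v) ≠ 0 for all v ≠ 0, and suppose that for every a ∈ ℝ the level set ω^{-1}({a}) is connected. Let g ∈ C¹(ℝ^d, ℝ) satisfy: for all v', v'' ∈ ℝ^d, ω(v') + ω(v'') = ω(v' + v'') implies g(v') + g(v'') = g(v' + v''). Then there exist b ∈ ℝ^d and c ∈ ℝ such that g(v) = b·v + c ω(v) for all v ∈ ℝ^d. -/

import Mathlib

open Set Filter Topology

variable {E : Type*} [NormedAddCommGroup E] [NormedSpace ℝ E] [FiniteDimensional ℝ E]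

/-- Chart straightening a C¹ function near a regular point: there is a partial homeomorphism `Φ`
fixing... such that `F = (fderiv F x) ∘ Φ` globally and `Φ.symm` is C¹ on the target. -/
lemma aux_chart {F : E → ℝ} (hF : ContDiff ℝ 1 F) {x : E} (hx : fderiv ℝ F x ≠ 0) :
    ∃ Φ : OpenPartialHomeomorph E E,
      x ∈ Φ.source ∧
      (∀ y, F y = fderiv ℝ F x (Φ y)) ∧
      (∀ z ∈ Φ.target, ContDiffAt ℝ 1 Φ.symm z) := by
  set L := fderiv ℝ F x with hL
  -- pick u with L u = 1
  obtain ⟨w, hw⟩ : ∃ w, L w ≠ 0 := by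
    by_contra h
    push_neg at h
    exact hx (ContinuousLinearMap.ext fun w => by simp [h w])
  set u : E := (L w)⁻¹ • w with hu
  have hLu : L u = 1 := by
    simp [hu, map_smul, inv_mul_cancel₀ hw]
  set Θ : E → E := fun y => y + (F y - L y) • u with hΘ
  have hkey : ∀ y, L (Θ y) = F y := by
    intro y
    simp [hΘ, map_add, map_smul, hLu, smul_eq_mul]
  set D : E → E →L[ℝ] E := fun y =>
    ContinuousLinearMap.id ℝ E + (fderiv ℝ F y - L).smulRight u with hD
  have hder : ∀ y, HasFDerivAt Θ (D y) y := by
    intro y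
    have h1 : HasFDerivAt (fun y => F y - L y) (fderiv ℝ F y - L) y :=
      ((hF.differentiable one_ne_zero y).hasFDerivAt).sub (L.hasFDerivAt)
    have h2 := h1.smul_const u
    exact (hasFDerivAt_id y).add h2
  have hΘcd : ContDiff ℝ 1 Θ := by
    have : ContDiff ℝ 1 (fun y => F y - L y) := hF.sub L.contDiff
    exact contDiff_id.add (this.smul contDiff_const)
  have hDx : D x = ContinuousLinearMap.id ℝ E := by
    ext v; simp [hD, hL]
  have hderx : HasFDerivAt Θ ((ContinuousLinearEquiv.refl ℝ E : E ≃L[ℝ] E) : E →L[ℝ] E) x := by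
    simpa [hDx] using hder x
  set Φ₀ := hΘcd.contDiffAt.toOpenPartialHomeomorph Θ hderx one_ne_zero with hΦ₀
  have hΦ₀coe : (Φ₀ : E → E) = Θ := hΘcd.contDiffAt.toOpenPartialHomeomorph_coe hderx one_ne_zero
  -- the open set where D y is invertible
  obtain ⟨ε, hε, hεu⟩ : ∃ ε : ℝ, 0 < ε ∧ ε * ‖u‖ < 1 := by
    refine ⟨(‖u‖ + 1)⁻¹, by positivity, ?_⟩
    rw [inv_mul_lt_iff₀ (by positivity)]
    nlinarith [norm_nonneg u]
  have hcontfd : Continuous fun y => fderiv ℝ F y := (hF.continuous_fderiv one_ne_zero)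
  set W : Set E := {y | ‖fderiv ℝ F y - L‖ < ε} with hW
  have hWopen : IsOpen W := by
    have : Continuous fun y => ‖fderiv ℝ F y - L‖ := (hcontfd.sub continuous_const).norm
    exact isOpen_lt this continuous_const
  have hxW : x ∈ W := by simp only [hW, mem_setOf_eq, ← hL, sub_self, norm_zero]; exact hε
  have hDW : ∀ y ∈ W, ∃ e : E ≃L[ℝ] E, (e : E →L[ℝ] E) = D y := by
    intro y hy
    have hn : ‖-((fderiv ℝ F y - L).smulRight u)‖ < 1 := by
      rw [norm_neg]
      calc ‖(fderiv ℝ F y - L).smulRight u‖ ≤ ‖fderiv ℝ F y - L‖ * ‖u‖ :=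
            (ContinuousLinearMap.norm_smulRight_apply _ _).le
        _ ≤ ε * ‖u‖ := by
            have := hy
            exact mul_le_mul_of_nonneg_right (le_of_lt this) (norm_nonneg u)
        _ < 1 := hεu
    refine ⟨ContinuousLinearEquiv.unitsEquiv ℝ E (Units.oneSub _ hn), ?_⟩
    ext v
    simp [ContinuousLinearEquiv.unitsEquiv_apply, Units.val_oneSub, hD]
  set Φ : OpenPartialHomeomorph E E := Φ₀.restrOpen W hWopen with hΦdef
  have hΦcoe : (Φ : E → E) = Θ := hΦ₀coe
  have hΦsymmcoe : (Φ.symm : E → E) = (Φ₀.symm : E → E) := rfl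
  refine ⟨Φ, ?_, ?_, ?_⟩
  · rw [OpenPartialHomeomorph.restrOpen_source]
    exact ⟨hΘcd.contDiffAt.mem_toOpenPartialHomeomorph_source hderx one_ne_zero, hxW⟩
  · intro y
    rw [hΦcoe]
    exact (hkey y).symm
  · intro z hz
    have hzsym : Φ.symm z ∈ Φ.source := Φ.map_target hz
    rw [OpenPartialHomeomorph.restrOpen_source] at hzsym
    obtain ⟨e, he⟩ := hDW _ hzsym.2
    have : HasFDerivAt (Φ : E → E) (e : E →L[ℝ] E) (Φ.symm z) := by
      rw [hΦcoe, he]; exact hder _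
    exact Φ.contDiffAt_symm hz this (by rw [hΦcoe]; exact hΘcd.contDiffAt)

/-- If near `x` the gradient of `h` is pointwise proportional to that of `F`, and `x` is a
regular point of `F`, then `h` is locally constant on the level set of `F` through `x`. -/
lemma aux_localconst {F h : E → ℝ} (hF : ContDiff ℝ 1 F) (hh : ContDiff ℝ 1 h) {x : E}
    (hx : fderiv ℝ F x ≠ 0) {N : Set E} (hN : N ∈ 𝓝 x)
    (hprop : ∀ y ∈ N, ∃ c : ℝ, fderiv ℝ h y = c • fderiv ℝ F y) :
    ∃ U ∈ 𝓝 x, ∀ y ∈ U, F y = F x → h y = h x := by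
  classical
  obtain ⟨Φ, hxs, hkey, hsymm⟩ := aux_chart hF hx
  set L := fderiv ℝ F x with hL
  have hΦx : Φ x ∈ Φ.target := Φ.map_source hxs
  have hsymmx : Φ.symm (Φ x) = x := Φ.left_inv hxs
  have hcsymm : ContinuousAt Φ.symm (Φ x) := Φ.continuousAt_symm hΦx
  have hnb : Φ.target ∩ Φ.symm ⁻¹' N ∈ 𝓝 (Φ x) := by
    refine Filter.inter_mem (Φ.open_target.mem_nhds hΦx) ?_
    exact hcsymm.preimage_mem_nhds (by rwa [hsymmx])
  obtain ⟨r, hr, hball⟩ := Metric.mem_nhds_iff.1 hnb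
  have hUmem : Φ.source ∩ Φ ⁻¹' Metric.ball (Φ x) r ∈ 𝓝 x := by
    refine Filter.inter_mem (Φ.open_source.mem_nhds hxs) ?_
    exact (Φ.continuousAt hxs).preimage_mem_nhds (Metric.ball_mem_nhds _ hr)
  refine ⟨_, hUmem, ?_⟩
  rintro y ⟨hys, hyb⟩ hFy
  set S : Set E := Metric.ball (Φ x) r ∩ {z | L z = F x} with hS
  have hSconv : Convex ℝ S := by
    refine (convex_ball _ _).inter (convex_hyperplane ?_ _)
    exact ⟨fun a b => map_add L a b, fun a b => map_smul L a b⟩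
  have hz₀S : Φ x ∈ S := ⟨Metric.mem_ball_self hr, (hkey x).symm⟩
  have hz₁S : Φ y ∈ S := ⟨hyb, by simp only [mem_setOf_eq]; rw [← hkey y, hFy]⟩
  have claim : ∀ z ∈ S, HasFDerivWithinAt (fun z' => h (Φ.symm z'))
      ((fun _ => (0 : E →L[ℝ] ℝ)) z) S z := by
    intro z hz
    have hzt : z ∈ Φ.target := (hball hz.1).1
    have hzN : Φ.symm z ∈ N := (hball hz.1).2
    obtain ⟨c, hc⟩ := hprop _ hzN
    have hsymdiff : DifferentiableAt ℝ Φ.symm z := (hsymm z hzt).differentiableAt one_ne_zero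
    set y' := Φ.symm z with hy'
    set Dz := fderiv ℝ Φ.symm z with hDz
    have hFcomp : HasFDerivAt (fun z' => F (Φ.symm z')) ((fderiv ℝ F y').comp Dz) z :=
      ((hF.differentiable one_ne_zero y').hasFDerivAt).comp z hsymdiff.hasFDerivAt
    have hFL : (fderiv ℝ F y').comp Dz = L := by
      have hev : (fun z' => F (Φ.symm z')) =ᶠ[𝓝 z] fun z' => L z' := by
        filter_upwards [Φ.open_target.mem_nhds hzt] with z' hz'
        rw [hkey (Φ.symm z'), Φ.right_inv hz']
      have h1 : fderiv ℝ (fun z' => F (Φ.symm z')) z = (fderiv ℝ F y').comp Dz :=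
        hFcomp.fderiv
      have h2 : fderiv ℝ (fun z' => L z') z = L := L.fderiv
      rw [← h1, hev.fderiv_eq, h2]
    have hcomp : HasFDerivAt (fun z' => h (Φ.symm z')) ((fderiv ℝ h y').comp Dz) z :=
      ((hh.differentiable one_ne_zero y').hasFDerivAt).comp z hsymdiff.hasFDerivAt
    rw [hc, ContinuousLinearMap.smul_comp, hFL] at hcomp
    have hφ : HasFDerivWithinAt (fun z' => c • L z') (c • L) S z :=
      ((L.hasFDerivAt).const_smul c).hasFDerivWithinAt
    have hφ0 : HasFDerivWithinAt (fun z' => c • L z') (0 : E →L[ℝ] ℝ) S z := by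
      refine (hasFDerivWithinAt_const (c • F x) z S).congr (fun z' hz' => ?_) ?_
      · rw [hz'.2]
      · rw [hz.2]
    have hfin := (hcomp.hasFDerivWithinAt.sub hφ).add hφ0
    simpa using hfin
  have hbound : ‖h (Φ.symm (Φ y)) - h (Φ.symm (Φ x))‖ ≤ 0 * ‖(Φ y : E) - Φ x‖ :=
    hSconv.norm_image_sub_le_of_norm_hasFDerivWithin_le (C := 0) claim
      (fun z _ => by simp) hz₀S hz₁S
  rw [Φ.left_inv hys, hsymmx, zero_mul] at hbound
  have := norm_le_zero_iff.1 hbound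
  linarith [sub_eq_zero.1 this]

/-- A differentiable local section of a submersion `F : E → ℝ` at a regular point. -/
lemma aux_section {F : E → ℝ} (hF : ContDiff ℝ 1 F) {x : E} (hx : fderiv ℝ F x ≠ 0) :
    ∃ σ : ℝ → E, σ (F x) = x ∧ DifferentiableAt ℝ σ (F x) ∧
      ∀ᶠ a in 𝓝 (F x), F (σ a) = a := by
  obtain ⟨Φ, hxs, hkey, hsymm⟩ := aux_chart hF hx
  set L := fderiv ℝ F x with hL
  obtain ⟨w, hw⟩ : ∃ w, L w ≠ 0 := by
    by_contra hcon
    push_neg at hcon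
    exact hx (ContinuousLinearMap.ext fun w => by simp [hcon w])
  set u : E := (L w)⁻¹ • w with hu
  have hLu : L u = 1 := by simp [hu, map_smul, inv_mul_cancel₀ hw]
  have hΦx : Φ x ∈ Φ.target := Φ.map_source hxs
  set z : ℝ → E := fun a => Φ x + (a - F x) • u with hz
  have hzc : Continuous z := by fun_prop
  have hzx : z (F x) = Φ x := by simp [hz]
  have hev : ∀ᶠ a in 𝓝 (F x), z a ∈ Φ.target := by
    have := hzc.continuousAt (x := F x)
    exact this.eventually_mem (by rw [hzx]; exact Φ.open_target.mem_nhds hΦx)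
  refine ⟨fun a => Φ.symm (z a), ?_, ?_, ?_⟩
  · show Φ.symm (z (F x)) = x
    rw [hzx]; exact Φ.left_inv hxs
  · have h1 : DifferentiableAt ℝ Φ.symm (z (F x)) := by
      rw [hzx]; exact ((hsymm _ hΦx).differentiableAt one_ne_zero)
    exact h1.comp _ (by fun_prop)
  · filter_upwards [hev] with a ha
    have hLz : L (z a) = a := by
      rw [hz]
      simp only [map_add, map_smul, hLu, smul_eq_mul, mul_one]
      rw [← hkey x]; ring
    show F (Φ.symm (z a)) = a
    rw [hkey (Φ.symm (z a)), Φ.right_inv ha, hLz]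

/-- A nonconstant continuous curve inside a level set of `F` through a regular point,
provided `dim E ≥ 2`. -/
lemma aux_curve {F : E → ℝ} (hF : ContDiff ℝ 1 F) {x : E} (hx : fderiv ℝ F x ≠ 0)
    (hdim : 1 < Module.finrank ℝ E) :
    ∃ γ : ℝ → E, ContinuousOn γ (Icc 0 1) ∧ γ 0 = x ∧ γ 1 ≠ x ∧
      ∀ s ∈ Icc (0:ℝ) 1, F (γ s) = F x := by
  obtain ⟨Φ, hxs, hkey, hsymm⟩ := aux_chart hF hx
  set L := fderiv ℝ F x with hL
  obtain ⟨e, he0, hLe⟩ : ∃ e : E, e ≠ 0 ∧ L e = 0 := by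
    by_contra hcon
    push_neg at hcon
    have hinj : Function.Injective L.toLinearMap := by
      rw [← LinearMap.ker_eq_bot, LinearMap.ker_eq_bot']
      intro m hm
      by_contra hm0
      exact (hcon m hm0) hm
    have := LinearMap.finrank_le_finrank_of_injective hinj
    simp [Module.finrank_self] at this
    omega
  have hΦx : Φ x ∈ Φ.target := Φ.map_source hxs
  obtain ⟨r, hr, hball⟩ := Metric.isOpen_iff.1 Φ.open_target _ hΦx
  set ε : ℝ := r / (2 * ‖e‖) with hε
  have hεpos : 0 < ε := by
    have : 0 < ‖e‖ := norm_pos_iff.2 he0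
    positivity
  have hmem : ∀ s ∈ Icc (0:ℝ) 1, Φ x + (s * ε) • e ∈ Φ.target := by
    intro s hs
    apply hball
    simp only [Metric.mem_ball, dist_eq_norm, add_sub_cancel_left]
    rw [norm_smul]
    have h1 : |s * ε| ≤ ε := by
      rw [abs_mul, abs_of_pos hεpos]
      nlinarith [abs_of_nonneg hs.1, hs.1, hs.2]
    have h2 : ε * ‖e‖ < r := by
      rw [hε]
      have : 0 < ‖e‖ := norm_pos_iff.2 he0
      rw [div_mul_eq_mul_div, mul_comm]
      rw [div_lt_iff₀ (by positivity)]
      nlinarith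
    calc ‖s * ε‖ * ‖e‖ ≤ ε * ‖e‖ := by
          apply mul_le_mul_of_nonneg_right _ (norm_nonneg e)
          rwa [Real.norm_eq_abs]
      _ < r := h2
  refine ⟨fun s => Φ.symm (Φ x + (s * ε) • e), ?_, ?_, ?_, ?_⟩
  · apply Φ.continuousOn_symm.comp (by fun_prop)
    intro s hs
    exact hmem s hs
  · simp only [zero_mul, zero_smul, add_zero]
    exact Φ.left_inv hxs
  · intro hcon
    have hcon' : Φ.symm (Φ x + ((1:ℝ) * ε) • e) = x := hcon
    have h1 : (Φ : E → E) (Φ.symm (Φ x + (1 * ε) • e)) = Φ x + (1 * ε) • e :=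
      Φ.right_inv (hmem 1 (by norm_num))
    rw [hcon'] at h1
    have : (1 * ε) • e = 0 := by
      have h2 := h1
      rwa [left_eq_add] at h2
    rw [one_mul] at this
    rcases smul_eq_zero.1 this with h | h
    · exact absurd h (ne_of_gt hεpos)
    · exact he0 h
  · intro s hs
    rw [hkey (Φ.symm (Φ x + (s * ε) • e)), Φ.right_inv (hmem s hs)]
    rw [map_add, map_smul, hLe, hkey x]
    simp

/-- Lagrange multiplier step: the gradient of `g - g(0)`-increment is proportional to that of
`ω` at every regular point, thanks to the collisional functional equation. -/
lemma aux_lagrange {ωf gf : E → ℝ} (hω : ContDiff ℝ 1 ωf) (hg : ContDiff ℝ 1 gf)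
    (hω0 : ωf 0 = 0) (hdω0 : fderiv ℝ ωf 0 = 0) (hg0 : gf 0 = 0)
    (v : E) (hv : fderiv ℝ ωf v ≠ 0)
    (hres : ∀ w, ωf v + ωf w = ωf (v + w) → gf v + gf w = gf (v + w)) :
    ∃ c : ℝ, fderiv ℝ gf v - fderiv ℝ gf 0 = c • fderiv ℝ ωf v := by
  set f : E → ℝ := fun w => ωf (v + w) - ωf w with hfdef
  set φ : E → ℝ := fun w => gf (v + w) - gf w with hφdef
  have htrans : HasStrictFDerivAt (fun w : E => v + w) (ContinuousLinearMap.id ℝ E) 0 :=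
    (hasStrictFDerivAt_id (0:E)).const_add v
  have hsv : HasStrictFDerivAt ωf (fderiv ℝ ωf v) ((fun w : E => v + w) 0) := by
    show HasStrictFDerivAt ωf (fderiv ℝ ωf v) (v + 0)
    rw [add_zero]
    exact (hω.contDiffAt).hasStrictFDerivAt one_ne_zero
  have hgv : HasStrictFDerivAt gf (fderiv ℝ gf v) ((fun w : E => v + w) 0) := by
    show HasStrictFDerivAt gf (fderiv ℝ gf v) (v + 0)
    rw [add_zero]
    exact (hg.contDiffAt).hasStrictFDerivAt one_ne_zero
  have hω00 : HasStrictFDerivAt ωf (0 : E →L[ℝ] ℝ) 0 := by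
    have := (hω.contDiffAt (x := (0:E))).hasStrictFDerivAt one_ne_zero
    rwa [hdω0] at this
  have hg00 : HasStrictFDerivAt gf (fderiv ℝ gf 0) 0 :=
    (hg.contDiffAt).hasStrictFDerivAt one_ne_zero
  have hf : HasStrictFDerivAt f (fderiv ℝ ωf v) 0 := by
    have h1 := (hsv.comp 0 htrans).sub hω00
    simp only [ContinuousLinearMap.comp_id, sub_zero] at h1; exact h1
  have hφ' : HasStrictFDerivAt φ (fderiv ℝ gf v - fderiv ℝ gf 0) 0 := by
    have h1 := (hgv.comp 0 htrans).sub hg00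
    simp only [ContinuousLinearMap.comp_id, sub_zero] at h1; exact h1
  have hextr : IsLocalExtrOn φ {w | f w = f 0} 0 := by
    have hval : ∀ w ∈ {w | f w = f 0}, φ w = φ 0 := by
      intro w hw
      simp only [mem_setOf_eq, hfdef] at hw
      rw [add_zero, hω0, sub_zero] at hw
      have hres' : ωf v + ωf w = ωf (v + w) := by linarith
      have := hres w hres'
      simp only [hφdef]
      rw [add_zero, hg0, sub_zero, ← this]
      ring
    exact Or.inr (eventually_mem_nhdsWithin.mono fun w hw => le_of_eq (hval w hw))
  obtain ⟨a, b, hab, heq⟩ := hextr.exists_multipliers_of_hasStrictFDerivAt_1d hf hφ'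
  have hb : b ≠ 0 := by
    intro hb0
    rw [hb0, zero_smul, add_zero] at heq
    rcases smul_eq_zero.1 heq with h | h
    · exact hab (by simp [h, hb0, Prod.ext_iff])
    · exact hv h
  refine ⟨b⁻¹ * (-a), ?_⟩
  have h2 : b • (fderiv ℝ gf v - fderiv ℝ gf 0) = (-a) • fderiv ℝ ωf v := by
    rw [neg_smul]
    rw [add_comm] at heq
    exact eq_neg_of_add_eq_zero_left heq
  calc fderiv ℝ gf v - fderiv ℝ gf 0
      = b⁻¹ • (b • (fderiv ℝ gf v - fderiv ℝ gf 0)) := by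
        rw [smul_smul, inv_mul_cancel₀ hb, one_smul]
    _ = b⁻¹ • ((-a) • fderiv ℝ ωf v) := by rw [h2]
    _ = (b⁻¹ * (-a)) • fderiv ℝ ωf v := by rw [smul_smul]

theorem stmt_13 (d : ℕ) (hd : 2 ≤ d) (ω g : (Fin d → ℝ) → ℝ)
    (hω : ContDiff ℝ 1 ω) (hg : ContDiff ℝ 1 g)
    (hω0 : ω 0 = 0) (hdω0 : fderiv ℝ ω 0 = 0)
    (hωpos : ∀ v : Fin d → ℝ, v ≠ 0 → 0 < ω v)
    (hdω : ∀ v : Fin d → ℝ, v ≠ 0 → fderiv ℝ ω v ≠ 0)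
    (hconn : ∀ a : ℝ, IsPreconnected (ω ⁻¹' {a}))
    (hcoll : ∀ v w : Fin d → ℝ, ω v + ω w = ω (v + w) → g v + g w = g (v + w)) :
    ∃ (b : Fin d → ℝ) (c : ℝ), ∀ v : Fin d → ℝ,
      g v = (∑ k, b k * v k) + c * ω v := by
  classical
  have hg0 : g 0 = 0 := by
    have h1 := hcoll 0 0 (by rw [add_zero, hω0, add_zero])
    rw [add_zero] at h1
    linarith
  set B := fderiv ℝ g 0 with hB
  set h : (Fin d → ℝ) → ℝ := fun v => g v - B v with hh
  have hhC : ContDiff ℝ 1 h := hg.sub B.contDiff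
  have hfdh : ∀ y, fderiv ℝ h y = fderiv ℝ g y - B := fun y =>
    (((hg.differentiable one_ne_zero y).hasFDerivAt).sub B.hasFDerivAt).fderiv
  have hzeroiff : ∀ v : Fin d → ℝ, ω v = 0 → v = 0 := by
    intro v hv
    by_contra hv0
    exact absurd hv (ne_of_gt (hωpos v hv0))
  have hres : ∀ v w : Fin d → ℝ, ω v + ω w = ω (v + w) → h v + h w = h (v + w) := by
    intro v w hr
    have h1 := hcoll v w hr
    simp only [hh]
    have h2 : B (v + w) = B v + B w := map_add B v w
    linarith
  have hh0 : h 0 = 0 := by simp [hh, hg0]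
  have hlam : ∀ y : Fin d → ℝ, y ≠ 0 → ∃ c : ℝ, fderiv ℝ h y = c • fderiv ℝ ω y := by
    intro y hy
    obtain ⟨c, hc⟩ := aux_lagrange hω hg hω0 hdω0 hg0 y (hdω y hy) (fun w => hcoll y w)
    exact ⟨c, by rw [hfdh, hB]; exact hc⟩
  -- `h` is constant on level sets of `ω`
  have hconst : ∀ v w : Fin d → ℝ, ω v = ω w → h v = h w := by
    intro v w hvw
    by_cases hv0 : ω v = 0
    · rw [hzeroiff v hv0, hzeroiff w (by rw [← hvw]; exact hv0)]
    · set L : Set (Fin d → ℝ) := ω ⁻¹' {ω v} with hLdef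
      have hne : ∀ y ∈ L, y ≠ 0 := by
        intro y hy h0
        apply hv0
        have h1 : ω y = ω v := hy
        rw [h0, hω0] at h1
        exact h1.symm
      have hOy : ∀ y ∈ L, ∃ O : Set (Fin d → ℝ), IsOpen O ∧ y ∈ O ∧
          ∀ x ∈ O, ω x = ω y → h x = h y := by
        intro y hy
        obtain ⟨U, hU, hUc⟩ := aux_localconst hω hhC (hdω y (hne y hy))
          (N := {x : Fin d → ℝ | x ≠ 0})
          ((isOpen_compl_singleton).mem_nhds (hne y hy)) (fun x hx => hlam x hx)
        obtain ⟨O, hOU, hOopen, hyO⟩ := mem_nhds_iff.1 hU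
        exact ⟨O, hOopen, hyO, fun x hx hωx => hUc x (hOU hx) hωx⟩
      choose! O hOopen hOmem hOconst using hOy
      by_contra hne'
      have hwL : w ∈ L := by
        simp only [hLdef, mem_preimage, mem_singleton_iff]
        exact hvw.symm
      have hvL : v ∈ L := rfl
      set U : Set (Fin d → ℝ) := ⋃ (y) (_ : y ∈ L ∧ h y = h v), O y with hU
      set V : Set (Fin d → ℝ) := ⋃ (y) (_ : y ∈ L ∧ h y ≠ h v), O y with hV
      have hUopen : IsOpen U := isOpen_iUnion fun y => isOpen_iUnion fun hy => hOopen y hy.1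
      have hVopen : IsOpen V := isOpen_iUnion fun y => isOpen_iUnion fun hy => hOopen y hy.1
      have hLUV : L ⊆ U ∪ V := by
        intro y hy
        by_cases hhy : h y = h v
        · exact Or.inl (mem_iUnion.2 ⟨y, mem_iUnion.2 ⟨⟨hy, hhy⟩, hOmem y hy⟩⟩)
        · exact Or.inr (mem_iUnion.2 ⟨y, mem_iUnion.2 ⟨⟨hy, hhy⟩, hOmem y hy⟩⟩)
      have hLU : (L ∩ U).Nonempty :=
        ⟨v, hvL, mem_iUnion.2 ⟨v, mem_iUnion.2 ⟨⟨hvL, rfl⟩, hOmem v hvL⟩⟩⟩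
      have hLV : (L ∩ V).Nonempty :=
        ⟨w, hwL, mem_iUnion.2 ⟨w, mem_iUnion.2 ⟨⟨hwL, fun hc => hne' hc.symm⟩, hOmem w hwL⟩⟩⟩
      obtain ⟨y, hyL, hyU, hyV⟩ := hconn (ω v) U V hUopen hVopen hLUV hLU hLV
      obtain ⟨y₁, hy₁⟩ := mem_iUnion.1 hyU
      obtain ⟨⟨hy₁L, hy₁h⟩, hyO₁⟩ := mem_iUnion.1 hy₁
      obtain ⟨y₂, hy₂⟩ := mem_iUnion.1 hyV
      obtain ⟨⟨hy₂L, hy₂h⟩, hyO₂⟩ := mem_iUnion.1 hy₂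
      have e1 : h y = h y₁ := hOconst y₁ hy₁L y hyO₁ (by rw [hyL, hy₁L])
      have e2 : h y = h y₂ := hOconst y₂ hy₂L y hyO₂ (by rw [hyL, hy₂L])
      exact hy₂h (by rw [← e2, e1, hy₁h])
  -- the induced function on level values
  set f : ℝ → ℝ := fun s => if hs : ∃ v : Fin d → ℝ, ω v = s then h hs.choose else 0 with hf
  have hfω : ∀ v : Fin d → ℝ, f (ω v) = h v := by
    intro v
    have hex : ∃ w : Fin d → ℝ, ω w = ω v := ⟨v, rfl⟩
    have h1 : f (ω v) = if hs : ∃ w : Fin d → ℝ, ω w = ω v then h hs.choose else 0 := rfl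
    rw [h1, dif_pos hex]
    exact hconst _ _ hex.choose_spec
  -- all intermediate values are attained
  have hatt : ∀ (v : Fin d → ℝ) (t : ℝ), 0 ≤ t → t ≤ ω v → ∃ w : Fin d → ℝ, ω w = t := by
    intro v t ht htv
    have hc : ContinuousOn (fun s : ℝ => ω (s • v)) (Icc 0 1) :=
      ((hω.continuous).comp (by fun_prop)).continuousOn
    have hIVT := intermediate_value_Icc (zero_le_one (α := ℝ)) hc
    have : t ∈ Icc (ω ((0:ℝ) • v)) (ω ((1:ℝ) • v)) := by
      rw [zero_smul, one_smul, hω0]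
      exact ⟨ht, htv⟩
    obtain ⟨s, _, hs⟩ := hIVT this
    exact ⟨s • v, hs⟩
  -- no global maximum
  have hnomax : ∀ v : Fin d → ℝ, v ≠ 0 → ∃ x : Fin d → ℝ, ω v < ω x := by
    intro v hv
    by_contra hcon
    push_neg at hcon
    have hmax : IsLocalMax ω v := Filter.Eventually.of_forall hcon
    exact hdω v hv hmax.fderiv_eq_zero
  -- local additivity of `f`
  have hadd : ∀ v : Fin d → ℝ, v ≠ 0 → ∃ δ > 0, ∀ t, 0 < t → t ≤ δ →
      f (ω v + t) = f (ω v) + f t := by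
    intro v hv
    set F : (Fin d → ℝ) → ℝ := fun w => ω (v + w) - ω w with hFdef
    have hFc : ContDiff ℝ 1 F := (hω.comp (contDiff_const.add contDiff_id)).sub hω
    have hF0 : fderiv ℝ F 0 = fderiv ℝ ω v := by
      have htrans : HasFDerivAt (fun w : Fin d → ℝ => v + w)
          (ContinuousLinearMap.id ℝ (Fin d → ℝ)) 0 := (hasFDerivAt_id (0 : Fin d → ℝ)).const_add v
      have hωv : HasFDerivAt ω (fderiv ℝ ω v) ((fun w : Fin d → ℝ => v + w) 0) := by
        show HasFDerivAt ω (fderiv ℝ ω v) (v + 0)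
        rw [add_zero]
        exact (hω.differentiable one_ne_zero v).hasFDerivAt
      have hω00 : HasFDerivAt ω (0 : (Fin d → ℝ) →L[ℝ] ℝ) 0 := by
        have h1 := (hω.differentiable one_ne_zero 0).hasFDerivAt
        rwa [hdω0] at h1
      have h1 := (hωv.comp 0 htrans).sub hω00
      have h2 : HasFDerivAt F (fderiv ℝ ω v) 0 := by simp only [ContinuousLinearMap.comp_id, sub_zero] at h1; exact h1
      exact h2.fderiv
    have hdim : 1 < Module.finrank ℝ (Fin d → ℝ) := by
      rw [Module.finrank_fin_fun]
      omega
    have hF0ne : fderiv ℝ F 0 ≠ 0 := by rw [hF0]; exact hdω v hv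
    obtain ⟨γ, hγc, hγ0, hγ1, hγF⟩ := aux_curve hFc hF0ne hdim
    have hres' : ∀ s ∈ Icc (0:ℝ) 1, ω v + ω (γ s) = ω (v + γ s) := by
      intro s hs
      have h1 := hγF s hs
      simp only [hFdef] at h1
      rw [add_zero, hω0, sub_zero] at h1
      linarith
    have hγ10 : γ 1 ≠ 0 := hγ1
    have hδpos : 0 < ω (γ 1) := hωpos _ hγ10
    refine ⟨ω (γ 1), hδpos, ?_⟩
    intro t ht htδ
    have hcont : ContinuousOn (fun s => ω (γ s)) (Icc 0 1) := hω.continuous.comp_continuousOn hγc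
    have hIVT := intermediate_value_Icc (zero_le_one (α := ℝ)) hcont
    have htmem : t ∈ Icc (ω (γ 0)) (ω (γ 1)) := by
      rw [hγ0, hω0]
      exact ⟨le_of_lt ht, htδ⟩
    obtain ⟨s, hs, hws⟩ := hIVT htmem
    have hws' : ω (γ s) = t := hws
    have hr : ω v + ω (γ s) = ω (v + γ s) := hres' s hs
    calc f (ω v + t) = f (ω v + ω (γ s)) := by rw [hws']
      _ = f (ω (v + γ s)) := by rw [hr]
      _ = h (v + γ s) := hfω _
      _ = h v + h (γ s) := (hres v (γ s) hr).symm
      _ = f (ω v) + f t := by rw [hfω v, ← hws', hfω (γ s)]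
  -- differentiability of `f` at positive attained values
  have hdiff : ∀ v : Fin d → ℝ, v ≠ 0 → DifferentiableAt ℝ f (ω v) := by
    intro v hv
    obtain ⟨σ, hσv, hσd, hσF⟩ := aux_section hω (hdω v hv)
    have hev : f =ᶠ[𝓝 (ω v)] fun a => h (σ a) := by
      filter_upwards [hσF] with a ha
      conv_lhs => rw [← ha]
      exact hfω (σ a)
    have hd1 : DifferentiableAt ℝ (fun a => h (σ a)) (ω v) := by
      have := (hhC.differentiable one_ne_zero (σ (ω v))).comp (ω v) hσd
      exact this
    exact hd1.congr_of_eventuallyEq hev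
  -- the common slope limit
  have hslope : ∀ v : Fin d → ℝ, v ≠ 0 →
      Filter.Tendsto (fun t : ℝ => f t / t) (nhdsWithin 0 (Ioi 0)) (nhds (deriv f (ω v))) := by
    intro v hv
    have hD : HasDerivAt f (deriv f (ω v)) (ω v) := (hdiff v hv).hasDerivAt
    have hsl := hasDerivAt_iff_tendsto_slope.1 hD
    have hmap : Filter.Tendsto (fun t : ℝ => ω v + t) (nhdsWithin 0 (Ioi 0))
        (nhdsWithin (ω v) {(ω v)}ᶜ) := by
      rw [tendsto_nhdsWithin_iff]
      constructor
      · apply Filter.Tendsto.mono_left _ nhdsWithin_le_nhds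
        have h1 : Filter.Tendsto (fun t : ℝ => ω v + t) (nhds 0) (nhds (ω v + 0)) :=
          (continuous_const.add continuous_id).tendsto 0
        rwa [add_zero] at h1
      · filter_upwards [self_mem_nhdsWithin] with t ht
        simp only [mem_compl_iff, mem_singleton_iff]
        intro hc
        have ht0 : (0:ℝ) < t := ht
        have : t = 0 := by linarith [hc]
        linarith
    have hcomp := hsl.comp hmap
    obtain ⟨δ, hδ, haddv⟩ := hadd v hv
    apply hcomp.congr'
    have hIoc : Ioc (0:ℝ) δ ∈ nhdsWithin (0:ℝ) (Ioi 0) :=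
      Ioc_mem_nhdsGT_of_mem ⟨le_refl 0, hδ⟩
    filter_upwards [hIoc] with t ht
    have hval := haddv t ht.1 ht.2
    show slope f (ω v) (ω v + t) = f t / t
    rw [slope_def_field]
    rw [hval]
    simp only [add_sub_cancel_left]
  -- a common derivative value `c`
  have h0d : 0 < d := by omega
  set v₀ : Fin d → ℝ := fun _ => 1 with hv₀
  have hv₀0 : v₀ ≠ 0 := by
    intro hc
    have := congrFun hc ⟨0, h0d⟩
    simp [hv₀] at this
  set c := deriv f (ω v₀) with hc
  have hceq : ∀ v : Fin d → ℝ, v ≠ 0 → deriv f (ω v) = c :=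
    fun v hv => tendsto_nhds_unique (hslope v hv) (hslope v₀ hv₀0)
  -- conclude `h = c • ω`
  have hfin : ∀ v : Fin d → ℝ, v ≠ 0 → h v = c * ω v := by
    intro v hv
    obtain ⟨x, hx⟩ := hnomax v hv
    have hder : ∀ a ∈ Ioo (0:ℝ) (ω x), HasDerivAt f c a := by
      intro a ha
      obtain ⟨va, hva⟩ := hatt x a (le_of_lt ha.1) (le_of_lt ha.2)
      have hva0 : va ≠ 0 := by
        intro h0
        rw [h0, hω0] at hva
        exact absurd hva.symm (ne_of_gt ha.1)
      have hd1 : HasDerivAt f (deriv f (ω va)) (ω va) := (hdiff va hva0).hasDerivAt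
      rw [hceq va hva0, hva] at hd1
      exact hd1
    have hωv : ω v ∈ Ioo (0:ℝ) (ω x) := ⟨hωpos v hv, hx⟩
    have hconstφ : ∀ a ∈ Ioo (0:ℝ) (ω x), ∀ b ∈ Ioo (0:ℝ) (ω x),
        f b - c * b = f a - c * a := by
      intro a ha b hb
      have hderφ : ∀ z ∈ Ioo (0:ℝ) (ω x),
          HasDerivWithinAt (fun y => f y - c * y) ((fun _ => (0:ℝ)) z) (Ioo (0:ℝ) (ω x)) z := by
        intro z hz
        have h1 : HasDerivAt (fun y : ℝ => c * y) c z := by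
          simpa using (hasDerivAt_id z).const_mul c
        have h2 := (hder z hz).sub h1
        rw [sub_self] at h2
        exact h2.hasDerivWithinAt
      have hbound := (convex_Ioo (0:ℝ) (ω x)).norm_image_sub_le_of_norm_hasDerivWithin_le
        (C := 0) hderφ (fun z _ => by simp) ha hb
      rw [zero_mul] at hbound
      have := norm_le_zero_iff.1 hbound
      linarith [sub_eq_zero.1 this]
    obtain ⟨δ, hδ, haddv⟩ := hadd v hv
    set t : ℝ := min δ ((ω x - ω v) / 2) with ht
    have ht0 : 0 < t := by
      apply lt_min hδ
      have := hωv.2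
      linarith
    have htδ : t ≤ δ := min_le_left _ _
    have ht2 : t ≤ (ω x - ω v) / 2 := min_le_right _ _
    have htI : t ∈ Ioo (0:ℝ) (ω x) := by
      constructor
      · exact ht0
      · have := hωv.1
        have := hωv.2
        linarith
    have hvtI : ω v + t ∈ Ioo (0:ℝ) (ω x) := by
      constructor
      · have := hωv.1
        linarith
      · linarith [hωv.2]
    have heq := haddv t ht0 htδ
    set k := f (ω v) - c * ω v with hk
    have e1 : f (ω v + t) - c * (ω v + t) = k := hconstφ _ hωv _ hvtI
    have e2 : f t - c * t = k := hconstφ _ hωv _ htI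
    have hk0 : k = 0 := by
      have : f (ω v + t) = f (ω v) + f t := heq
      have hfvt : f (ω v + t) = c * (ω v + t) + k := by linarith [e1]
      have hft : f t = c * t + k := by linarith [e2]
      have hfv : f (ω v) = c * ω v + k := by rw [hk]; ring
      rw [hfvt, hft, hfv] at this
      linarith
    have hfv : f (ω v) = c * ω v + k := by rw [hk]; ring
    rw [hk0, add_zero] at hfv
    rw [← hfω v, hfv]
  -- assemble the final statement
  refine ⟨fun k => B (Pi.single k 1), c, ?_⟩
  intro v
  have hv_expand : v = ∑ k, v k • (Pi.single k (1:ℝ) : Fin d → ℝ) := by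
    funext j
    rw [Finset.sum_apply]
    simp [Pi.single_apply]
  have hBv : B v = ∑ k, B (Pi.single k 1) * v k := by
    conv_lhs => rw [hv_expand]
    rw [map_sum]
    congr 1
    funext k
    rw [map_smul]
    simp [mul_comm]
  by_cases hv : v = 0
  · subst hv
    simp [hω0, hg0]
  · have h1 : h v = c * ω v := hfin v hv
    have h2 : g v = h v + B v := by simp [hh]
    rw [h2, h1, hBv]
    ring
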